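/- If G is a discrete simple group containing an infinite elementary abelian p-subgroup, then KO(G) = G; i.e., every homomorphism from G to GL_n(ℂ) is trivial. -/

import Mathlib

/-- A simple group containing an infinite elementary abelian `p`-subgroup admits no
non-trivial finite-dimensional complex representation; i.e. `KO(G) = G`. -/
theorem KO_eq_top_of_simple_with_infinite_elementary_abelian {G : Type*} [Group G]
    [IsSimpleGroup G]
    (h : ∃ p : ℕ, p.Prime ∧ ∃ H : Subgroup G, Infinite H ∧ IsMulCommutative H ∧
      ∀ g ∈ H, g ^ p = 1) :
    ∀ (n : ℕ) (ρ : G →* GL (Fin n) ℂ) (g : G), ρ g = 1 := by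
  intro n ρ g
  rcases (MonoidHom.normal_ker ρ).eq_bot_or_eq_top with hk | hk
  · -- kernel is trivial: derive a contradiction
    exfalso
    obtain ⟨p, hp, H, hInf, hComm, hpow⟩ := h
    have hinj : Function.Injective ρ := (MonoidHom.ker_eq_bot_iff ρ).mp hk
    -- the family of endomorphisms of ℂ^n given by elements of H
    set M := Fin n → ℂ
    let f : H → Module.End ℂ M :=
      fun i ↦ Matrix.toLinAlgEquiv' ((ρ (i : G) : Matrix (Fin n) (Fin n) ℂ))
    have hfinj : Function.Injective f := by
      intro i j hij
      have : (ρ (i : G) : Matrix (Fin n) (Fin n) ℂ) = (ρ (j : G) : Matrix (Fin n) (Fin n) ℂ) :=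
        Matrix.toLinAlgEquiv'.injective hij
      exact Subtype.ext (hinj (Units.ext this))
    have hfpow : ∀ i, f i ^ p = 1 := by
      intro i
      have h1 : (ρ (i : G)) ^ p = 1 := by
        rw [← map_pow, hpow (i : G) i.2, map_one]
      have h2 : (ρ (i : G) : Matrix (Fin n) (Fin n) ℂ) ^ p = 1 := by
        rw [← Units.val_pow_eq_pow_val, h1, Units.val_one]
      calc f i ^ p = Matrix.toLinAlgEquiv' ((ρ (i : G) : Matrix (Fin n) (Fin n) ℂ) ^ p) := by
            rw [map_pow]
        _ = 1 := by rw [h2, map_one]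
    -- commuting family
    have hcomm : ∀ i j : H, Commute (f i) (f j) := by
      intro i j
      have : (i : G) * (j : G) = (j : G) * (i : G) := by
        have := hComm.is_comm.comm i j
        exact_mod_cast congrArg (fun x : H => (x : G)) this
      have : ρ ((i : G)) * ρ ((j : G)) = ρ ((j : G)) * ρ ((i : G)) := by
        rw [← map_mul, ← map_mul, this]
      have hm : (ρ (i : G) : Matrix (Fin n) (Fin n) ℂ) * (ρ (j : G) : Matrix (Fin n) (Fin n) ℂ)
          = (ρ (j : G) : Matrix (Fin n) (Fin n) ℂ) * (ρ (i : G) : Matrix (Fin n) (Fin n) ℂ) := by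
        rw [← Units.val_mul, ← Units.val_mul, this]
      show f i * f j = f j * f i
      simp only [f, ← map_mul, hm]
    -- each f i is semisimple, annihilated by the squarefree polynomial X^p - 1
    have hp0 : ((p : ℕ) : ℂ) ≠ 0 := Nat.cast_ne_zero.mpr hp.ne_zero
    have hsq : Squarefree (Polynomial.X ^ p - Polynomial.C (1 : ℂ)) :=
      (Polynomial.separable_X_pow_sub_C (1 : ℂ) hp0 one_ne_zero).squarefree
    have hss : ∀ i, (f i).IsSemisimple := by
      intro i
      apply Module.End.isSemisimple_of_squarefree_aeval_eq_zero hsq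
      simp [map_sub, map_pow, Polynomial.aeval_X, Polynomial.aeval_C, hfpow i, Algebra.algebraMap_eq_smul_one]
    -- eigenspace action on simultaneous eigenspaces
    set V : (H → ℂ) → Submodule ℂ M := fun χ ↦ ⨅ i, (f i).maxGenEigenspace (χ i) with hV
    have hact : ∀ (χ : H → ℂ) (i : H) (x : M), x ∈ V χ → f i x = χ i • x := by
      intro χ i x hx
      have h1 : x ∈ (f i).maxGenEigenspace (χ i) := by
        exact (Submodule.mem_iInf _).mp hx i
      rw [((hss i).isFinitelySemisimple).maxGenEigenspace_eq_eigenspace] at h1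
      exact Module.End.mem_eigenspace_iff.mp h1
    -- spanning
    have hspan : ⨆ χ : H → ℂ, V χ = ⊤ := by
      apply Module.End.iSup_iInf_maxGenEigenspace_eq_top_of_iSup_maxGenEigenspace_eq_top_of_commute
      · intro i j _
        exact hcomm i j
      · intro i
        exact Module.End.iSup_maxGenEigenspace_eq_top (f i)
    -- independence and finiteness of the support
    have hind : iSupIndep V :=
      Module.End.independent_iInf_maxGenEigenspace_of_forall_mapsTo f
        (fun i j φ ↦ Module.End.mapsTo_maxGenEigenspace_of_comm (hcomm j i) φ)
    have hSfin : Set.Finite {χ : H → ℂ | V χ ≠ ⊥} :=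
      Submodule.finite_ne_bot_of_iSupIndep hind
    -- eigenvalues are p-th roots of unity
    have hroot : ∀ χ ∈ {χ : H → ℂ | V χ ≠ ⊥}, ∀ i : H, (χ i) ^ p = 1 := by
      intro χ hχ i
      obtain ⟨x, hxV, hx0⟩ := Submodule.exists_mem_ne_zero_of_ne_bot hχ
      have hev : (f i).HasEigenvector (χ i) x :=
        ⟨Module.End.mem_eigenspace_iff.mpr (hact χ i x hxV), hx0⟩
      have h1 : ((f i) ^ p) x = (χ i) ^ p • x := hev.pow_apply p
      rw [hfpow i] at h1
      have h2 : ((χ i) ^ p - 1) • x = 0 := by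
        rw [sub_smul, one_smul, ← h1]
        simp
      rcases smul_eq_zero.mp h2 with h3 | h3
      · exact sub_eq_zero.mp h3
      · exact absurd h3 hx0
    -- the injection from H into a finite type
    set S := {χ : H → ℂ | V χ ≠ ⊥}
    set T := {z : ℂ | z ^ p = 1}
    have hTfin : Set.Finite T := by
      have : T ⊆ {z : ℂ | (Polynomial.X ^ p - Polynomial.C (1 : ℂ)).IsRoot z} := by
        intro z hz
        simp [Polynomial.IsRoot, sub_eq_zero]
        exact hz
      exact Set.Finite.subset (Polynomial.finite_setOf_isRoot hsq.ne_zero) this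
    let Φ : H → (S → T) := fun i χ ↦ ⟨χ.1 i, hroot χ.1 χ.2 i⟩
    have hΦ : Function.Injective Φ := by
      intro i j hij
      apply hfinj
      have : ∀ χ ∈ S, ∀ x ∈ V χ, f i x = f j x := by
        intro χ hχ x hx
        rw [hact χ i x hx, hact χ j x hx]
        have := congrFun hij ⟨χ, hχ⟩
        have : χ i = χ j := congrArg Subtype.val this
        rw [this]
      have hker : ∀ χ : H → ℂ, V χ ≤ LinearMap.ker (f i - f j) := by
        intro χ
        by_cases hχ : V χ = ⊥
        · rw [hχ]; exact bot_le
        · intro x hx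
          simp only [LinearMap.mem_ker, LinearMap.sub_apply, sub_eq_zero]
          exact this χ hχ x hx
      have : (⊤ : Submodule ℂ M) ≤ LinearMap.ker (f i - f j) := by
        rw [← hspan]
        exact iSup_le hker
      have hk0 : LinearMap.ker (f i - f j) = ⊤ := top_le_iff.mp this
      exact sub_eq_zero.mp (LinearMap.ker_eq_top.mp hk0)
    haveI : Finite S := hSfin.to_subtype
    haveI : Finite T := hTfin.to_subtype
    haveI : Finite H := Finite.of_injective Φ hΦ
    exact not_finite H
  · -- kernel is everything
    have : g ∈ MonoidHom.ker ρ := by rw [hk]; trivial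
    exact this
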